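/- arXiv:2301.08726 — 6 statements merged into one kernel-verified Lean document; each statement's English description precedes it below -/
import Mathlib

section
/- Let ν(t) = α(t) − ε'(t) − ε(t)/β. A twice continuously differentiable curve x : [0,∞) → ℝⁿ solves (VM-DIN-AVD) with x(0) = x0 and ẋ(0) = ẋ0 if and only if the pair (x, y), where y(t) = −ε(t)ẋ(t) − β∇f(x(t)) − ν(t)x(t), satisfies the first-order system ε(t)ẋ(t) + β∇f(x(t)) + ν(t)x(t) + y(t) = 0 and ẏ(t) + ν'(t)x(t) + (ν(t)/β)x(t) + (1/β)y(t) = 0 for all t ≥ 0, with y(0) = −ε(0)ẋ0 − β∇f(x0) − (α(0) − ε'(0) − ε(0)/β)x0. In particular, this first-order reformulation involves ∇f but not ∇²f. -/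
open Real Filter MeasureTheory Set

noncomputable def hessApp {n : ℕ} (f : EuclideanSpace ℝ (Fin n) → ℝ)
    (x v : EuclideanSpace ℝ (Fin n)) : EuclideanSpace ℝ (Fin n) :=
  fderiv ℝ (gradient f) x v

def StandingF {n : ℕ} (f : EuclideanSpace ℝ (Fin n) → ℝ) : Prop :=
  ConvexOn ℝ Set.univ f ∧ ContDiff ℝ 2 f ∧
    Filter.Tendsto f (Filter.cocompact _) Filter.atTop ∧
    ∀ s : Set (EuclideanSpace ℝ (Fin n)), Bornology.IsBounded s →
      ∃ μ > 0, StrongConvexOn s μ f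

def AdmissibleEps (ε : ℝ → ℝ) : Prop :=
  AntitoneOn ε (Set.Ici 0) ∧ (∀ t ∈ Set.Ici (0:ℝ), 0 < ε t) ∧
    Differentiable ℝ ε ∧ Differentiable ℝ (deriv ε) ∧
    ∃ M, ∀ t ∈ Set.Ici (0:ℝ), |deriv (deriv ε) t| ≤ M

def AdmissibleAlpha (α : ℝ → ℝ) : Prop :=
  AntitoneOn α (Set.Ici 0) ∧ (∀ t ∈ Set.Ici (0:ℝ), 0 ≤ α t) ∧ Differentiable ℝ α

def IsSolVM {n : ℕ} (f : EuclideanSpace ℝ (Fin n) → ℝ) (β : ℝ) (ε α : ℝ → ℝ)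
    (x : ℝ → EuclideanSpace ℝ (Fin n)) (x0 v0 : EuclideanSpace ℝ (Fin n)) : Prop :=
  ContDiff ℝ 2 x ∧ x 0 = x0 ∧ deriv x 0 = v0 ∧
    ∀ t ∈ Set.Ici (0:ℝ),
      ε t • deriv (deriv x) t + α t • deriv x t
        + β • hessApp f (x t) (deriv x t) + gradient f (x t) = 0

def IsSolCN {n : ℕ} (f : EuclideanSpace ℝ (Fin n) → ℝ) (β : ℝ)
    (x : ℝ → EuclideanSpace ℝ (Fin n)) (x0 : EuclideanSpace ℝ (Fin n)) : Prop :=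
  ContDiff ℝ 1 x ∧ x 0 = x0 ∧
    ∀ t ∈ Set.Ici (0:ℝ), β • hessApp f (x t) (deriv x t) + gradient f (x t) = 0

def IsSolLM {n : ℕ} (f : EuclideanSpace ℝ (Fin n) → ℝ) (β : ℝ) (α : ℝ → ℝ)
    (x : ℝ → EuclideanSpace ℝ (Fin n)) (x0 : EuclideanSpace ℝ (Fin n)) : Prop :=
  ContDiff ℝ 1 x ∧ x 0 = x0 ∧
    ∀ t ∈ Set.Ici (0:ℝ),
      α t • deriv x t + β • hessApp f (x t) (deriv x t) + gradient f (x t) = 0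

theorem stmt1 {n : ℕ} (f : EuclideanSpace ℝ (Fin n) → ℝ) (β : ℝ) (hβ : 0 < β)
    (hf : StandingF f) (ε α : ℝ → ℝ) (hε : AdmissibleEps ε) (hα : AdmissibleAlpha α)
    (x0 v0 : EuclideanSpace ℝ (Fin n))
    (x : ℝ → EuclideanSpace ℝ (Fin n)) (hx : ContDiff ℝ 2 x)
    (ν : ℝ → ℝ) (hν : ∀ t, ν t = α t - deriv ε t - ε t / β)
    (y : ℝ → EuclideanSpace ℝ (Fin n))
    (hy : ∀ t, y t = -(ε t • deriv x t) - β • gradient f (x t) - ν t • x t) :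
    (x 0 = x0 ∧ deriv x 0 = v0 ∧
      ∀ t ∈ Set.Ici (0:ℝ),
        ε t • deriv (deriv x) t + α t • deriv x t
          + β • hessApp f (x t) (deriv x t) + gradient f (x t) = 0)
    ↔
    (x 0 = x0 ∧ deriv x 0 = v0 ∧
      (∀ t ∈ Set.Ici (0:ℝ),
        ε t • deriv x t + β • gradient f (x t) + ν t • x t + y t = 0 ∧
        deriv y t + deriv ν t • x t + (ν t / β) • x t + (1 / β) • y t = 0) ∧
      y 0 = -(ε 0 • v0) - β • gradient f x0
            - (α 0 - deriv ε 0 - ε 0 / β) • x0) := by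
  have hβ' : β ≠ 0 := hβ.ne'
  have hgraddiff : Differentiable ℝ (gradient f) := by
    have h1 : ContDiff ℝ 1 (fderiv ℝ f) := hf.2.1.fderiv_right (by norm_num)
    have h2 : gradient f = fun z => (InnerProductSpace.toDual ℝ _).symm (fderiv ℝ f z) := rfl
    rw [h2]
    exact ((InnerProductSpace.toDual ℝ _).symm.toContinuousLinearEquiv.differentiable).comp
      (h1.differentiable one_ne_zero)
  have hxdiff : Differentiable ℝ x := hx.differentiable (by norm_num)
  have hx'diff : Differentiable ℝ (deriv x) := by
    have h := contDiff_succ_iff_deriv (n := 1) (f := x) (𝕜 := ℝ)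
    norm_num at h
    exact ((h.mp hx).2).differentiable one_ne_zero
  have hνdiff : Differentiable ℝ ν := by
    rw [funext hν]
    exact (hα.2.2.sub hε.2.2.2.1).sub (hε.2.2.1.div_const β)
  have hG : ∀ t, HasDerivAt (fun s => gradient f (x s))
      (hessApp f (x t) (deriv x t)) t := fun t =>
    ((hgraddiff (x t)).hasFDerivAt).comp_hasDerivAt t (hxdiff t).hasDerivAt
  have hY : ∀ t, HasDerivAt y
      (-(ε t • deriv (deriv x) t + deriv ε t • deriv x t)
        - β • hessApp f (x t) (deriv x t)
        - (ν t • deriv x t + deriv ν t • x t)) t := by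
    intro t
    have h1 : HasDerivAt (fun s => ε s • deriv x s)
        (ε t • deriv (deriv x) t + deriv ε t • deriv x t) t :=
      (hε.2.2.1 t).hasDerivAt.smul (hx'diff t).hasDerivAt
    have h2 : HasDerivAt (fun s => β • gradient f (x s))
        (β • hessApp f (x t) (deriv x t)) t := (hG t).const_smul β
    have h3 : HasDerivAt (fun s => ν s • x s)
        (ν t • deriv x t + deriv ν t • x t) t :=
      (hνdiff t).hasDerivAt.smul (hxdiff t).hasDerivAt
    have h4 := (h1.neg.sub h2).sub h3
    have h5 : y = fun s => -(ε s • deriv x s) - β • gradient f (x s) - ν s • x s :=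
      funext hy
    rw [h5]
    exact h4
  have key : ∀ t, deriv y t + deriv ν t • x t + (ν t / β) • x t + (1 / β) • y t
      = -(ε t • deriv (deriv x) t + α t • deriv x t
          + β • hessApp f (x t) (deriv x t) + gradient f (x t)) := by
    intro t
    rw [(hY t).deriv, hy t, hν t]
    match_scalars <;> (field_simp; try ring)
  constructor
  · rintro ⟨h0, h1, hVM⟩
    refine ⟨h0, h1, fun t ht => ⟨by rw [hy t]; abel, ?_⟩, ?_⟩
    · rw [key t, hVM t ht, neg_zero]
    · rw [hy 0, hν 0, h0, h1]
  · rintro ⟨h0, h1, hCN, -⟩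
    refine ⟨h0, h1, fun t ht => ?_⟩
    have h2 := (hCN t ht).2
    rw [key t] at h2
    exact neg_eq_zero.mp h2
end

section
/- Let x be a solution of (VM-DIN-AVD) and define U(t) = (ε(t)/2)‖ẋ(t)‖² + f(x(t)) − f(x*), where x* is the unique minimizer of f. Then U is differentiable, and for every t > 0 its derivative equals U'(t) = (ε'(t)/2)‖ẋ(t)‖² − α(t)‖ẋ(t)‖² − β⟨∇²f(x(t))ẋ(t), ẋ(t)⟩ ≤ 0; in particular U is non-increasing. -/
open Real Filter MeasureTheory Set

section Aux

variable {n : ℕ}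
local notation "E" => EuclideanSpace ℝ (Fin n)

/-- If `g s ≤ g t` for all `s > t` and `g` has derivative `d` at `t`, then `d ≤ 0`. -/
lemma aux_hasDerivAt_nonpos {g : ℝ → ℝ} {d t : ℝ} (hd : HasDerivAt g d t)
    (H : ∀ s > t, g s ≤ g t) : d ≤ 0 := by
  have h1 : Tendsto (slope g t) (nhdsWithin t (Ioi t)) (nhds d) :=
    (hasDerivAt_iff_tendsto_slope.1 hd).mono_left
      (nhdsWithin_mono t fun s hs => ne_of_gt hs)
  refine le_of_tendsto h1 ?_
  filter_upwards [self_mem_nhdsWithin] with s hs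
  have h2 : (0:ℝ) < s - t := sub_pos.2 hs
  have h3 : g s - g t ≤ 0 := sub_nonpos.2 (H s hs)
  rw [slope_def_field]
  exact div_nonpos_of_nonpos_of_nonneg h3 h2.le

lemma aux_hasDerivAt_nonneg {g : ℝ → ℝ} {d t : ℝ} (hd : HasDerivAt g d t)
    (H : ∀ s > t, g t ≤ g s) : 0 ≤ d := by
  have := aux_hasDerivAt_nonpos (hd.neg) (fun s hs => neg_le_neg (H s hs))
  linarith

noncomputable def auxDualEquiv (n : ℕ) :
    StrongDual ℝ (EuclideanSpace ℝ (Fin n)) ≃ₗᵢ[ℝ] EuclideanSpace ℝ (Fin n) :=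
  (InnerProductSpace.toDual ℝ (EuclideanSpace ℝ (Fin n))).symm

lemma aux_grad_diff {f : E → ℝ} (hf : ContDiff ℝ 2 f) : Differentiable ℝ (gradient f) := by
  have h1 : ContDiff ℝ 1 (fderiv ℝ f) := hf.fderiv_right (by norm_num)
  have h2 : Differentiable ℝ (fderiv ℝ f) := h1.differentiable one_ne_zero
  intro p
  exact (((auxDualEquiv n).toContinuousLinearEquiv.differentiable).differentiableAt).comp
    p (h2 p)

lemma aux_comp_grad {f : E → ℝ} (hf : ContDiff ℝ 2 f) {c : ℝ → E} {c' : E} {t : ℝ}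
    (hc : HasDerivAt c c' t) :
    HasDerivAt (fun s => f (c s)) (inner ℝ (gradient f (c t)) c' : ℝ) t := by
  have hd : DifferentiableAt ℝ f (c t) := (hf.differentiable (by norm_num)).differentiableAt
  have := (hd.hasGradientAt.hasFDerivAt).comp_hasDerivAt t hc
  rw [InnerProductSpace.toDual_apply_apply] at this
  exact this

/-- positive semidefiniteness of the Hessian of a convex `C²` function. -/
lemma aux_hess_psd {f : E → ℝ} (hconv : ConvexOn ℝ Set.univ f) (hf : ContDiff ℝ 2 f)
    (p v : E) : 0 ≤ (inner ℝ (hessApp f p v) v : ℝ) := by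
  set c : ℝ → E := fun s => p + s • v with hc
  have hcd : ∀ s : ℝ, HasDerivAt c v s := fun s => by
    rw [hc]; simpa using ((hasDerivAt_id s).smul_const v).const_add p
  have hφ : ∀ s : ℝ, HasDerivAt (fun s => f (c s)) (inner ℝ (gradient f (c s)) v : ℝ) s :=
    fun s => aux_comp_grad hf (hcd s)
  -- convexity of the restriction to the line
  have hconvφ : ConvexOn ℝ Set.univ (fun s : ℝ => f (c s)) := by
    refine ⟨convex_univ, ?_⟩
    intro a _ b _ ta tb hta htb hab
    have h1 : p = ta • p + tb • p := by rw [← add_smul, hab, one_smul]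
    have hcc : c (ta • a + tb • b) = ta • c a + tb • c b := by
      calc c (ta • a + tb • b) = p + (ta * a + tb * b) • v := by simp [hc, smul_eq_mul]
        _ = (ta • p + tb • p) + ((ta * a) • v + (tb * b) • v) := by rw [← h1, add_smul]
        _ = ta • c a + tb • c b := by
            simp only [hc, smul_add, smul_smul]
            abel
    show f (c (ta • a + tb • b)) ≤ ta • f (c a) + tb • f (c b)
    rw [hcc]
    exact hconv.2 (Set.mem_univ (c a)) (Set.mem_univ (c b)) hta htb hab
  have hderiv : deriv (fun s => f (c s)) = fun s => (inner ℝ (gradient f (c s)) v : ℝ) :=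
    funext fun s => (hφ s).deriv
  have hmono : Monotone fun s : ℝ => (inner ℝ (gradient f (c s)) v : ℝ) := by
    have h := hconvφ.monotoneOn_deriv (fun s _ => (hφ s).differentiableAt)
    rw [hderiv] at h
    exact monotoneOn_univ.1 h
  -- derivative of the inner-product function at 0
  have hg : HasDerivAt (fun s => gradient f (c s)) (hessApp f p v) 0 := by
    have h0 : c 0 = p := by simp [hc]
    have := ((aux_grad_diff hf (c 0)).hasFDerivAt).comp_hasDerivAt 0 (hcd 0)
    rw [h0] at this
    exact this
  have hψ : HasDerivAt (fun s : ℝ => (inner ℝ (gradient f (c s)) v : ℝ))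
      (inner ℝ (hessApp f p v) v : ℝ) 0 := by
    have h := hg.inner ℝ (hasDerivAt_const (0:ℝ) v)
    simpa using h
  exact aux_hasDerivAt_nonneg (g := fun s : ℝ => (inner ℝ (gradient f (c s)) v : ℝ)) hψ
    (fun s hs => hmono hs.le)

end Aux

theorem stmt2 {n : ℕ} (f : EuclideanSpace ℝ (Fin n) → ℝ) (β : ℝ) (hβ : 0 < β)
    (hf : StandingF f) (ε α : ℝ → ℝ) (hε : AdmissibleEps ε) (hα : AdmissibleAlpha α)
    (x0 v0 : EuclideanSpace ℝ (Fin n)) (x : ℝ → EuclideanSpace ℝ (Fin n))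
    (hsol : IsSolVM f β ε α x x0 v0)
    (xstar : EuclideanSpace ℝ (Fin n)) (hmin : ∀ z, f xstar ≤ f z)
    (U : ℝ → ℝ)
    (hU : ∀ t, U t = ε t / 2 * ‖deriv x t‖ ^ 2 + f (x t) - f xstar) :
    (∀ t > (0:ℝ),
      HasDerivAt U
        (deriv ε t / 2 * ‖deriv x t‖ ^ 2 - α t * ‖deriv x t‖ ^ 2
          - β * (inner ℝ (hessApp f (x t) (deriv x t)) (deriv x t) : ℝ)) t ∧
      deriv ε t / 2 * ‖deriv x t‖ ^ 2 - α t * ‖deriv x t‖ ^ 2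
          - β * (inner ℝ (hessApp f (x t) (deriv x t)) (deriv x t) : ℝ) ≤ 0) ∧
    AntitoneOn U (Set.Ici 0) := by
  obtain ⟨hconv, hf2, -, -⟩ := hf
  obtain ⟨hεanti, hεpos, hεdiff, -, -⟩ := hε
  obtain ⟨-, hαnonneg, -⟩ := hα
  obtain ⟨hx2, -, -, hode⟩ := hsol
  have hxd : Differentiable ℝ x := hx2.differentiable (by norm_num)
  have hx'c1 : ContDiff ℝ 1 (deriv x) := by
    have h : ContDiff ℝ (1+1) x := by norm_num [hx2]
    exact (contDiff_succ_iff_deriv.mp h).2.2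
  have hx'd : Differentiable ℝ (deriv x) := hx'c1.differentiable one_ne_zero
  -- derivative of U at any t ≥ 0
  have key : ∀ t : ℝ, 0 ≤ t → HasDerivAt U
      (deriv ε t / 2 * ‖deriv x t‖ ^ 2 - α t * ‖deriv x t‖ ^ 2
        - β * (inner ℝ (hessApp f (x t) (deriv x t)) (deriv x t) : ℝ)) t := by
    intro t ht
    have hx' : HasDerivAt x (deriv x t) t := (hxd t).hasDerivAt
    have hx'' : HasDerivAt (deriv x) (deriv (deriv x) t) t := (hx'd t).hasDerivAt
    have hN : HasDerivAt (fun s => (inner ℝ (deriv x s) (deriv x s) : ℝ))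
        ((inner ℝ (deriv x t) (deriv (deriv x) t) : ℝ)
          + (inner ℝ (deriv (deriv x) t) (deriv x t) : ℝ)) t := hx''.inner ℝ hx''
    have hfc : HasDerivAt (fun s => f (x s)) (inner ℝ (gradient f (x t)) (deriv x t) : ℝ) t :=
      aux_comp_grad hf2 hx'
    have hεt : HasDerivAt ε (deriv ε t) t := (hεdiff t).hasDerivAt
    have hUeq : U = fun s => ε s / 2 * (inner ℝ (deriv x s) (deriv x s) : ℝ) + f (x s) - f xstar := by
      funext s; rw [hU s, real_inner_self_eq_norm_sq]
    rw [hUeq]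
    have hprod := (((hεt.div_const 2).mul hN).add hfc).sub_const (f xstar)
    refine hprod.congr_deriv (Eq.symm ?_)
    -- use the ODE
    have hode' := hode t ht
    have hinner := congrArg
      (fun w : EuclideanSpace ℝ (Fin n) => (inner ℝ w (deriv x t) : ℝ)) hode'
    simp only [inner_add_left, real_inner_smul_left, inner_zero_left] at hinner
    have hsym : (inner ℝ (deriv x t) (deriv (deriv x) t) : ℝ)
        = inner ℝ (deriv (deriv x) t) (deriv x t) := real_inner_comm _ _
    rw [← real_inner_self_eq_norm_sq, hsym]
    linear_combination -hinner
  have nonpos : ∀ t : ℝ, 0 < t →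
      deriv ε t / 2 * ‖deriv x t‖ ^ 2 - α t * ‖deriv x t‖ ^ 2
        - β * (inner ℝ (hessApp f (x t) (deriv x t)) (deriv x t) : ℝ) ≤ 0 := by
    intro t ht
    have hε' : deriv ε t ≤ 0 := by
      refine aux_hasDerivAt_nonpos (hεdiff t).hasDerivAt (fun s hs => ?_)
      exact hεanti (Set.mem_Ici.2 ht.le) (Set.mem_Ici.2 (ht.le.trans hs.le)) hs.le
    have hαt : 0 ≤ α t := hαnonneg t (Set.mem_Ici.2 ht.le)
    have hpsd : 0 ≤ (inner ℝ (hessApp f (x t) (deriv x t)) (deriv x t) : ℝ) :=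
      aux_hess_psd hconv hf2 (x t) (deriv x t)
    have hN : (0:ℝ) ≤ ‖deriv x t‖ ^ 2 := sq_nonneg _
    have h1 : deriv ε t / 2 * ‖deriv x t‖ ^ 2 ≤ 0 :=
      mul_nonpos_of_nonpos_of_nonneg (by linarith) hN
    have h2 : 0 ≤ α t * ‖deriv x t‖ ^ 2 := mul_nonneg hαt hN
    have h3 : 0 ≤ β * (inner ℝ (hessApp f (x t) (deriv x t)) (deriv x t) : ℝ) :=
      mul_nonneg hβ.le hpsd
    linarith
  refine ⟨fun t ht => ⟨key t ht.le, nonpos t ht⟩, ?_⟩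
  have hcont : Continuous U := by
    have hUe : U = fun t => ε t / 2 * ‖deriv x t‖ ^ 2 + f (x t) - f xstar := funext hU
    rw [hUe]
    exact (((hεdiff.continuous.div_const 2).mul ((hx'd.continuous.norm).pow 2)).add
      ((hf2.continuous).comp hxd.continuous)).sub continuous_const
  refine antitoneOn_of_deriv_nonpos (convex_Ici 0) hcont.continuousOn ?_ ?_
  · rw [interior_Ici]
    exact fun t ht => ((key t (le_of_lt ht)).differentiableAt).differentiableWithinAt
  · rw [interior_Ici]
    intro t ht
    rw [(key t ht.le).deriv]
    exact nonpos t ht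
end

section
/- Let x be a solution of (VM-DIN-AVD) and set U(0) = (ε(0)/2)‖ẋ0‖² + f(x0) − f(x*). Then for all t ≥ 0, ε(t)‖ẋ(t)‖ ≤ √(2U(0)) · √(ε(t)). -/
open Real Filter MeasureTheory Set

lemma nonneg_of_right_mono {g : ℝ → ℝ} {g' t0 : ℝ}
    (hm : ∀ s, t0 < s → g t0 ≤ g s) (hd : HasDerivAt g g' t0) : 0 ≤ g' := by
  rw [hasDerivAt_iff_tendsto_slope] at hd
  have h2 : Tendsto (slope g t0) (nhdsWithin t0 (Set.Ioi t0)) (nhds g') :=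
    hd.mono_left (nhdsWithin_mono _ fun s hs => ne_of_gt hs)
  refine ge_of_tendsto h2 ?_
  filter_upwards [self_mem_nhdsWithin] with s hs
  have hts : t0 < s := hs
  rw [slope_def_field]
  exact div_nonneg (sub_nonneg.2 (hm s hts)) (sub_nonneg.2 hts.le)

lemma grad_inner_eq {n : ℕ} (f : EuclideanSpace ℝ (Fin n) → ℝ)
    (p v : EuclideanSpace ℝ (Fin n)) :
    (inner ℝ (gradient f p) v : ℝ) = fderiv ℝ f p v :=
  InnerProductSpace.toDual_symm_apply

lemma grad_differentiable {n : ℕ} {f : EuclideanSpace ℝ (Fin n) → ℝ}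
    (hf : ContDiff ℝ 2 f) : Differentiable ℝ (gradient f) := by
  have h1 : ContDiff ℝ 1 (fderiv ℝ f) := hf.fderiv_right (by norm_num)
  have : gradient f = (fun L : (EuclideanSpace ℝ (Fin n)) →L[ℝ] ℝ =>
      (InnerProductSpace.toDual ℝ _).symm L) ∘ fderiv ℝ f := rfl
  rw [this]
  exact ((InnerProductSpace.toDual ℝ _).symm.toContinuousLinearEquiv.differentiable).comp
    (h1.differentiable (by norm_num))

lemma hess_inner_nonneg {n : ℕ} {f : EuclideanSpace ℝ (Fin n) → ℝ}
    (hconv : ConvexOn ℝ Set.univ f) (hf : ContDiff ℝ 2 f)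
    (p v : EuclideanSpace ℝ (Fin n)) :
    0 ≤ (inner ℝ (fderiv ℝ (gradient f) p v) v : ℝ) := by
  have hfd : Differentiable ℝ f := hf.differentiable (by norm_num)
  have hgd : Differentiable ℝ (gradient f) := grad_differentiable hf
  set c : ℝ → EuclideanSpace ℝ (Fin n) := fun s => p + s • v with hc_def
  have hc : ∀ s : ℝ, HasDerivAt c v s := by
    intro s
    rw [hc_def]
    simpa using ((hasDerivAt_id s).smul_const v).const_add p
  set h : ℝ → ℝ := fun s => f (c s) with hh_def
  have hconvh : ConvexOn ℝ (Set.univ : Set ℝ) h := by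
    refine ⟨convex_univ, fun s _ t _ a b ha hb hab => ?_⟩
    have key : c (a • s + b • t) = a • c s + b • c t := by
      simp only [hc_def, smul_add, smul_smul, smul_eq_mul]
      rw [add_add_add_comm, ← add_smul, ← add_smul, hab, one_smul]
    have h2 := hconv.2 (Set.mem_univ (c s)) (Set.mem_univ (c t)) ha hb hab
    rw [← key] at h2
    exact h2
  have hh : ∀ s : ℝ, HasDerivAt h (inner ℝ (gradient f (c s)) v : ℝ) s := by
    intro s
    have h0 := (hfd (c s)).hasFDerivAt.comp_hasDerivAt s (hc s)
    rw [grad_inner_eq]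
    exact h0
  have hderiv_eq : ∀ s : ℝ, deriv h s = (inner ℝ (gradient f (c s)) v : ℝ) :=
    fun s => (hh s).deriv
  have hmono : MonotoneOn (deriv h) Set.univ :=
    hconvh.monotoneOn_deriv (fun s _ => (hh s).differentiableAt)
  set φ : ℝ → ℝ := fun s => (inner ℝ (gradient f (c s)) v : ℝ) with hφ_def
  have hφmono : ∀ s, (0:ℝ) < s → φ 0 ≤ φ s := by
    intro s hs
    rw [hφ_def]
    simp only
    rw [← hderiv_eq, ← hderiv_eq]
    exact hmono (Set.mem_univ 0) (Set.mem_univ s) hs.le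
  have hc0 : c 0 = p := by simp [hc_def]
  have hG : HasDerivAt (fun s => gradient f (c s)) (fderiv ℝ (gradient f) p v) 0 := by
    have := (hgd (c 0)).hasFDerivAt.comp_hasDerivAt 0 (hc 0)
    rwa [hc0] at this
  have hφd : HasDerivAt φ (inner ℝ (fderiv ℝ (gradient f) p v) v : ℝ) 0 := by
    have := HasDerivAt.inner ℝ hG (hasDerivAt_const 0 v)
    rw [hφ_def]
    simpa using this
  exact nonneg_of_right_mono hφmono hφd

theorem stmt3 {n : ℕ} (f : EuclideanSpace ℝ (Fin n) → ℝ) (β : ℝ) (hβ : 0 < β)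
    (hf : StandingF f) (ε α : ℝ → ℝ) (hε : AdmissibleEps ε) (hα : AdmissibleAlpha α)
    (x0 v0 : EuclideanSpace ℝ (Fin n)) (x : ℝ → EuclideanSpace ℝ (Fin n))
    (hsol : IsSolVM f β ε α x x0 v0)
    (xstar : EuclideanSpace ℝ (Fin n)) (hmin : ∀ z, f xstar ≤ f z)
    (U0 : ℝ) (hU0 : U0 = ε 0 / 2 * ‖v0‖ ^ 2 + f x0 - f xstar) :
    ∀ t ∈ Set.Ici (0:ℝ),
      ε t * ‖deriv x t‖ ≤ Real.sqrt (2 * U0) * Real.sqrt (ε t) := by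
  obtain ⟨hx2, hx0, hv0, hode⟩ := hsol
  have hconv := hf.1
  have hfc := hf.2.1
  have hfd : Differentiable ℝ f := hfc.differentiable (by norm_num)
  have hxd : Differentiable ℝ x := hx2.differentiable (by norm_num)
  have hx'd : Differentiable ℝ (deriv x) := by
    have h1 : ContDiff ℝ 1 (fderiv ℝ x) := hx2.fderiv_right (by norm_num)
    have h2 : ContDiff ℝ 1 (fun t => fderiv ℝ x t 1) := h1.clm_apply contDiff_const
    have h3 : deriv x = fun t => fderiv ℝ x t 1 := by
      funext t; rw [fderiv_apply_one_eq_deriv]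
    rw [h3]
    exact h2.differentiable (by norm_num)
  have εd := hε.2.2.1
  set E : ℝ → ℝ := fun t => ε t / 2 * ‖deriv x t‖ ^ 2 + (f (x t) - f xstar) with hE_def
  set D : ℝ → ℝ := fun t => deriv ε t / 2 * ‖deriv x t‖ ^ 2
      + ε t * (inner ℝ (deriv (deriv x) t) (deriv x t) : ℝ)
      + (inner ℝ (gradient f (x t)) (deriv x t) : ℝ) with hD_def
  have hE : ∀ t, HasDerivAt E (D t) t := by
    intro t
    have hx't : HasDerivAt x (deriv x t) t := (hxd t).hasDerivAt
    have hx''t : HasDerivAt (deriv x) (deriv (deriv x) t) t := (hx'd t).hasDerivAt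
    have hN : HasDerivAt (fun s => ‖deriv x s‖ ^ 2)
        (2 * (inner ℝ (deriv (deriv x) t) (deriv x t) : ℝ)) t := by
      have h0 := HasDerivAt.inner ℝ hx''t hx''t
      have heq : (fun s => ‖deriv x s‖ ^ 2)
          = fun s => (inner ℝ (deriv x s) (deriv x s) : ℝ) := by
        funext s; exact (real_inner_self_eq_norm_sq _).symm
      rw [heq]
      exact h0.congr_deriv (by rw [real_inner_comm]; ring)
    have hfx : HasDerivAt (fun s => f (x s))
        ((inner ℝ (gradient f (x t)) (deriv x t) : ℝ)) t := by
      have h0 := (hfd (x t)).hasFDerivAt.comp_hasDerivAt t hx't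
      rw [grad_inner_eq]
      exact h0
    have hεt : HasDerivAt ε (deriv ε t) t := (εd t).hasDerivAt
    have h4 := ((hεt.div_const 2).mul hN).add (hfx.sub_const (f xstar))
    exact h4.congr_deriv (by simp only [hD_def]; ring)
  have hDnonpos : ∀ t ∈ Set.Ici (0:ℝ), D t ≤ 0 := by
    intro t ht
    have ht' : (0:ℝ) ≤ t := ht
    have heq := hode t ht
    have hip := congrArg (fun w => (inner ℝ w (deriv x t) : ℝ)) heq
    simp only [inner_add_left, real_inner_smul_left, inner_zero_left] at hip
    have hεneg : deriv ε t ≤ 0 := by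
      have hd : HasDerivAt (fun s => -ε s) (-deriv ε t) t := ((εd t).hasDerivAt).neg
      have hm : ∀ s, t < s → -ε t ≤ -ε s := by
        intro s hs
        exact neg_le_neg (hε.1 ht (Set.mem_Ici.mpr (ht'.trans hs.le)) hs.le)
      linarith [nonneg_of_right_mono hm hd]
    have hαt : 0 ≤ α t := hα.2.1 t ht
    have hH : 0 ≤ (inner ℝ (hessApp f (x t) (deriv x t)) (deriv x t) : ℝ) :=
      hess_inner_nonneg hconv hfc (x t) (deriv x t)
    have hself : (0:ℝ) ≤ (inner ℝ (deriv x t) (deriv x t) : ℝ) := real_inner_self_nonneg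
    have hsq : (0:ℝ) ≤ ‖deriv x t‖ ^ 2 := sq_nonneg _
    simp only [hD_def]
    nlinarith [mul_nonneg hαt hself, mul_nonneg hβ.le hH,
      mul_nonpos_of_nonpos_of_nonneg hεneg hsq]
  have hEdiff : Differentiable ℝ E := fun t => (hE t).differentiableAt
  have hanti : AntitoneOn E (Set.Ici 0) := by
    apply antitoneOn_of_deriv_nonpos (convex_Ici 0) hEdiff.continuous.continuousOn
      (fun t _ => (hEdiff t).differentiableWithinAt)
    intro t ht
    rw [interior_Ici] at ht
    rw [(hE t).deriv]
    exact hDnonpos t (le_of_lt (show (0:ℝ) < t from ht))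
  intro t ht
  have ht' : (0:ℝ) ≤ t := ht
  have h1 : E t ≤ E 0 := hanti Set.self_mem_Ici ht ht'
  have hE0 : E 0 = U0 := by
    simp only [hE_def, hv0, hx0, hU0]
    ring
  have hfx_ge : 0 ≤ f (x t) - f xstar := sub_nonneg.2 (hmin _)
  have hεt : 0 < ε t := hε.2.1 t ht
  have hkey : ε t * ‖deriv x t‖ ^ 2 ≤ 2 * U0 := by
    have h2 : ε t / 2 * ‖deriv x t‖ ^ 2 + (f (x t) - f xstar) ≤ U0 := hE0 ▸ h1
    linarith
  have h2U0 : 0 ≤ 2 * U0 :=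
    le_trans (mul_nonneg hεt.le (sq_nonneg _)) hkey
  calc ε t * ‖deriv x t‖
      = Real.sqrt ((ε t * ‖deriv x t‖) ^ 2) :=
        (Real.sqrt_sq (mul_nonneg hεt.le (norm_nonneg _))).symm
    _ ≤ Real.sqrt (2 * U0 * ε t) := by
        apply Real.sqrt_le_sqrt
        nlinarith [mul_le_mul_of_nonneg_left hkey hεt.le]
    _ = Real.sqrt (2 * U0) * Real.sqrt (ε t) := Real.sqrt_mul h2U0 _
end

section
/- Set M0 = f(x0) + (ε(0)/2)‖ẋ0‖² and K0 = {y ∈ ℝⁿ : f(y) ≤ M0}. Then K0 is bounded, every solution x of (VM-DIN-AVD) (for any admissible pair (ε, α) with the same ε(0), x0, ẋ0) satisfies x(t) ∈ K0 for all t ≥ 0, and the solution x_N of (CN) with x_N(0) = x0 also satisfies x_N(t) ∈ K0 for all t ≥ 0. -/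
open Real Filter MeasureTheory Set

open scoped RealInnerProductSpace Topology

section Aux
variable {n : ℕ}
local notation "E" => EuclideanSpace ℝ (Fin n)

lemma line_hasDerivAt (x v : E) (s : ℝ) :
    HasDerivAt (fun s : ℝ => x + s • v) v s := by
  simpa using ((hasDerivAt_id s).smul_const v).const_add x

lemma fo_mono {f : E → ℝ} (hconv : ConvexOn ℝ Set.univ f) (hsm : ContDiff ℝ 2 f)
    (a b : E) : fderiv ℝ f a (b - a) ≤ fderiv ℝ f b (b - a) := by
  set v := b - a with hv
  have hdf : Differentiable ℝ f := hsm.differentiable two_ne_zero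
  have hφ : ∀ s : ℝ, HasDerivAt (fun s : ℝ => f (a + s • v)) (fderiv ℝ f (a + s • v) v) s :=
    fun s => (hdf (a + s • v)).hasFDerivAt.comp_hasDerivAt s (line_hasDerivAt a v s)
  have hφconv : ConvexOn ℝ Set.univ (fun s : ℝ => f (a + s • v)) := by
    have h := hconv.comp_affineMap (AffineMap.lineMap a b : ℝ →ᵃ[ℝ] E)
    simp only [Set.preimage_univ] at h
    have hfun : (fun s : ℝ => f (a + s • v)) = f ∘ AffineMap.lineMap a b := by
      funext s
      simp only [Function.comp_apply, AffineMap.lineMap_apply_module]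
      congr 1
      module
    rw [hfun]
    exact h
  have hm := hφconv.monotoneOn_deriv (fun s _ => (hφ s).differentiableAt)
  have h01 := hm (Set.mem_univ (0:ℝ)) (Set.mem_univ (1:ℝ)) zero_le_one
  rw [(hφ 0).deriv, (hφ 1).deriv] at h01
  simpa [hv] using h01

lemma grad_mono {f : E → ℝ} (hconv : ConvexOn ℝ Set.univ f) (hsm : ContDiff ℝ 2 f)
    (a b : E) : 0 ≤ ⟪gradient f b - gradient f a, b - a⟫ := by
  have h := fo_mono hconv hsm a b
  have hg : ∀ y w : E, ⟪gradient f y, w⟫ = fderiv ℝ f y w := fun y w =>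
    InnerProductSpace.toDual_symm_apply
  rw [inner_sub_left, hg, hg]
  linarith

lemma grad_diff {f : E → ℝ} (hsm : ContDiff ℝ 2 f) : Differentiable ℝ (gradient f) := by
  have h2 : (2 : WithTop ℕ∞) = 1 + 1 := by norm_num
  rw [h2, contDiff_succ_iff_fderiv] at hsm
  have hfd : Differentiable ℝ (fderiv ℝ f) := hsm.2.2.differentiable one_ne_zero
  exact fun y => ((InnerProductSpace.toDual ℝ E).symm.differentiable.differentiableAt).comp y (hfd y)

lemma hess_psd {f : E → ℝ} (hconv : ConvexOn ℝ Set.univ f) (hsm : ContDiff ℝ 2 f)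
    (x v : E) : 0 ≤ ⟪fderiv ℝ (gradient f) x v, v⟫ := by
  have hgd := grad_diff hsm
  set ψ : ℝ → ℝ := fun s => ⟪gradient f (x + s • v) - gradient f x, v⟫ with hψ
  have hψ0 : ψ 0 = 0 := by simp [hψ]
  have h0 : x + (0:ℝ) • v = x := by simp
  have hcomp : HasDerivAt (fun s : ℝ => gradient f (x + s • v))
      (fderiv ℝ (gradient f) x v) 0 := by
    have hF : HasFDerivAt (gradient f) (fderiv ℝ (gradient f) x)
        ((fun s : ℝ => x + s • v) 0) := by
      simp only [zero_smul, add_zero]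
      exact (hgd x).hasFDerivAt
    exact hF.comp_hasDerivAt 0 (line_hasDerivAt x v 0)
  have hψd : HasDerivAt ψ ⟪fderiv ℝ (gradient f) x v, v⟫ 0 := by
    have := (hcomp.sub_const (gradient f x)).inner ℝ (hasDerivAt_const (0:ℝ) v)
    simpa using this
  have hslope := hasDerivAt_iff_tendsto_slope.mp hψd
  have hmono : Tendsto (slope ψ 0) (𝓝[>] 0) (𝓝 ⟪fderiv ℝ (gradient f) x v, v⟫) :=
    hslope.mono_left (nhdsWithin_mono _ (fun s hs => ne_of_gt hs))
  refine ge_of_tendsto hmono ?_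
  filter_upwards [self_mem_nhdsWithin] with s (hs : 0 < s)
  have hψs : 0 ≤ ψ s := by
    have h := grad_mono hconv hsm x (x + s • v)
    have h2 : x + s • v - x = s • v := by abel
    rw [h2, real_inner_smul_right] at h
    exact nonneg_of_mul_nonneg_right h hs
  rw [slope_def_field, hψ0]
  apply div_nonneg <;> linarith

lemma deriv_nonpos_of_anti {g : ℝ → ℝ} (hg : AntitoneOn g (Set.Ici 0))
    (hd : Differentiable ℝ g) {s : ℝ} (hs : 0 < s) : deriv g s ≤ 0 := by
  have h := hasDerivAt_iff_tendsto_slope.mp (hd s).hasDerivAt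
  have hmono : Tendsto (slope g s) (𝓝[>] s) (𝓝 (deriv g s)) :=
    h.mono_left (nhdsWithin_mono _ fun u hu => ne_of_gt hu)
  refine le_of_tendsto hmono ?_
  filter_upwards [self_mem_nhdsWithin] with u (hu : s < u)
  rw [slope_def_field]
  apply div_nonpos_of_nonpos_of_nonneg
  · have := hg (mem_Ici.mpr hs.le) (mem_Ici.mpr (hs.trans hu).le) hu.le
    linarith
  · linarith

lemma descent {g : ℝ → ℝ} (hdiff : Differentiable ℝ g)
    (hd : ∀ t ∈ Set.Ioi (0:ℝ), deriv g t ≤ 0) {t : ℝ} (ht : 0 ≤ t) : g t ≤ g 0 := by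
  have h := antitoneOn_of_deriv_nonpos (convex_Ici (0:ℝ))
    hdiff.continuous.continuousOn
    (hdiff.differentiableOn.mono interior_subset)
    (fun s hs => hd s (by rwa [interior_Ici] at hs))
  exact h (self_mem_Ici) (mem_Ici.mpr ht) ht

end Aux

theorem stmt4 {n : ℕ} (f : EuclideanSpace ℝ (Fin n) → ℝ) (β : ℝ) (hβ : 0 < β)
    (hf : StandingF f) (x0 v0 : EuclideanSpace ℝ (Fin n)) (ε0 : ℝ) (hε0 : 0 < ε0)
    (M0 : ℝ) (hM0 : M0 = f x0 + ε0 / 2 * ‖v0‖ ^ 2)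
    (K0 : Set (EuclideanSpace ℝ (Fin n))) (hK0 : K0 = {z | f z ≤ M0}) :
    Bornology.IsBounded K0 ∧
    (∀ ε α : ℝ → ℝ, ∀ x : ℝ → EuclideanSpace ℝ (Fin n),
      AdmissibleEps ε → AdmissibleAlpha α → ε 0 = ε0 →
      IsSolVM f β ε α x x0 v0 → ∀ t ∈ Set.Ici (0:ℝ), x t ∈ K0) ∧
    (∀ xN : ℝ → EuclideanSpace ℝ (Fin n),
      IsSolCN f β xN x0 → ∀ t ∈ Set.Ici (0:ℝ), xN t ∈ K0) := by
  obtain ⟨hconv, hsm, hcoer, -⟩ := hf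
  have hgradinner : ∀ (y w : EuclideanSpace ℝ (Fin n)),
      ⟪gradient f y, w⟫ = fderiv ℝ f y w := fun y w => InnerProductSpace.toDual_symm_apply
  -- Part 1 : boundedness
  have hbdd : Bornology.IsBounded K0 := by
    have hmem : f ⁻¹' (Set.Ici (M0 + 1)) ∈ cocompact (EuclideanSpace ℝ (Fin n)) :=
      hcoer (Ici_mem_atTop _)
    rw [mem_cocompact] at hmem
    obtain ⟨K, hKc, hKs⟩ := hmem
    refine hKc.isBounded.subset ?_
    rw [hK0]
    intro z hz
    by_contra hzK
    have h1 : M0 + 1 ≤ f z := hKs hzK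
    simp only [Set.mem_setOf_eq] at hz
    linarith
  refine ⟨hbdd, ?_, ?_⟩
  · -- Part 2 : VM-DIN-AVD
    rintro ε α x ⟨hεanti, hεpos, hεdiff, -, -⟩ ⟨hαanti, hαnonneg, -⟩ hε0eq
      ⟨hX, hx00, hdx0, hode⟩ t ht
    have hxdiff : Differentiable ℝ x := hX.differentiable two_ne_zero
    have h2 : (2 : WithTop ℕ∞) = 1 + 1 := by norm_num
    rw [h2, contDiff_succ_iff_deriv] at hX
    have hddx : Differentiable ℝ (deriv x) := hX.2.2.differentiable one_ne_zero
    set En : ℝ → ℝ := fun τ => f (x τ) + ε τ / 2 * ⟪deriv x τ, deriv x τ⟫ with hEn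
    have hEd : ∀ τ : ℝ, HasDerivAt En
        (⟪gradient f (x τ), deriv x τ⟫ + (deriv ε τ / 2 * ⟪deriv x τ, deriv x τ⟫
          + ε τ / 2 * (⟪deriv x τ, deriv (deriv x) τ⟫ + ⟪deriv (deriv x) τ, deriv x τ⟫))) τ := by
      intro τ
      have hA : HasDerivAt (fun s => f (x s)) ⟪gradient f (x τ), deriv x τ⟫ τ := by
        rw [hgradinner]
        exact (hsm.differentiable two_ne_zero (x τ)).hasFDerivAt.comp_hasDerivAt τ
          (hxdiff τ).hasDerivAt
      have hB : HasDerivAt (fun s => ε s / 2) (deriv ε τ / 2) τ :=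
        (hεdiff τ).hasDerivAt.div_const 2
      have hC := HasDerivAt.inner ℝ (hddx τ).hasDerivAt (hddx τ).hasDerivAt
      exact hA.add (hB.mul hC)
    have hEdiff : Differentiable ℝ En := fun τ => (hEd τ).differentiableAt
    have hkey : ∀ τ ∈ Set.Ioi (0:ℝ), deriv En τ ≤ 0 := by
      intro τ hτ
      have hτ0 : (0:ℝ) ≤ τ := (mem_Ioi.mp hτ).le
      have hode' := congrArg (fun w => ⟪w, deriv x τ⟫) (hode τ (mem_Ici.mpr hτ0))
      simp only [inner_add_left, real_inner_smul_left, inner_zero_left] at hode'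
      rw [(hEd τ).deriv]
      have hI : (0:ℝ) ≤ ⟪deriv x τ, deriv x τ⟫ := real_inner_self_nonneg
      have hP : (0:ℝ) ≤ ⟪hessApp f (x τ) (deriv x τ), deriv x τ⟫ :=
        hess_psd hconv hsm (x τ) (deriv x τ)
      have hε' : deriv ε τ ≤ 0 := deriv_nonpos_of_anti hεanti hεdiff (mem_Ioi.mp hτ)
      have hα : 0 ≤ α τ := hαnonneg τ (mem_Ici.mpr hτ0)
      have hcomm : ⟪deriv x τ, deriv (deriv x) τ⟫ = ⟪deriv (deriv x) τ, deriv x τ⟫ :=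
        real_inner_comm _ _
      rw [hcomm]
      nlinarith [mul_nonneg hα hI, mul_nonneg hβ.le hP, mul_nonpos_of_nonpos_of_nonneg hε' hI]
    have hdesc : En t ≤ En 0 := descent hEdiff hkey (mem_Ici.mp ht)
    have hEn0 : En 0 = M0 := by
      rw [hEn]
      simp only [hx00, hdx0, hε0eq, hM0, real_inner_self_eq_norm_sq]
    have hεt : 0 < ε t := hεpos t ht
    have hIt : (0:ℝ) ≤ ⟪deriv x t, deriv x t⟫ := real_inner_self_nonneg
    have hft : f (x t) ≤ En t := by
      rw [hEn]
      nlinarith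
    rw [hK0]
    simp only [Set.mem_setOf_eq]
    calc f (x t) ≤ En t := hft
      _ ≤ En 0 := hdesc
      _ = M0 := hEn0
  · -- Part 3 : CN
    rintro xN ⟨hXN, hxN0, hodeN⟩ t ht
    have hxdiff : Differentiable ℝ xN := hXN.differentiable one_ne_zero
    set F : ℝ → ℝ := fun τ => f (xN τ) with hF
    have hFd : ∀ τ : ℝ, HasDerivAt F ⟪gradient f (xN τ), deriv xN τ⟫ τ := by
      intro τ
      rw [hgradinner]
      exact (hsm.differentiable two_ne_zero (xN τ)).hasFDerivAt.comp_hasDerivAt τ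
        (hxdiff τ).hasDerivAt
    have hFdiff : Differentiable ℝ F := fun τ => (hFd τ).differentiableAt
    have hkey : ∀ τ ∈ Set.Ioi (0:ℝ), deriv F τ ≤ 0 := by
      intro τ hτ
      have hτ0 : (0:ℝ) ≤ τ := (mem_Ioi.mp hτ).le
      have hode' := congrArg (fun w => ⟪w, deriv xN τ⟫) (hodeN τ (mem_Ici.mpr hτ0))
      simp only [inner_add_left, real_inner_smul_left, inner_zero_left] at hode'
      rw [(hFd τ).deriv]
      have hP : (0:ℝ) ≤ ⟪hessApp f (xN τ) (deriv xN τ), deriv xN τ⟫ :=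
        hess_psd hconv hsm (xN τ) (deriv xN τ)
      nlinarith [mul_nonneg hβ.le hP]
    have hdesc : F t ≤ F 0 := descent hFdiff hkey (mem_Ici.mp ht)
    have hF0 : F 0 = f x0 := by rw [hF]; simp [hxN0]
    rw [hK0]
    simp only [Set.mem_setOf_eq]
    have : (0:ℝ) ≤ ε0 / 2 * ‖v0‖ ^ 2 := by positivity
    calc f (xN t) ≤ F 0 := hdesc
      _ = f x0 := hF0
      _ ≤ M0 := by rw [hM0]; linarith
end

section
/- Let x be a solution of (VM-DIN-AVD). Then for all t ≥ 0 the gradient along the trajectory admits the integral representation β∇f(x(t)) = β e^{−t/β} ∇f(x0) + e^{−t/β} ε(0) ẋ0 − ε(t)ẋ(t) + e^{−t/β} ∫₀ᵗ e^{s/β} ( ε(s)/β + ε'(s) − α(s) ) ẋ(s) ds. -/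
open Real Filter MeasureTheory Set

theorem stmt6 {n : ℕ} (f : EuclideanSpace ℝ (Fin n) → ℝ) (β : ℝ) (hβ : 0 < β)
    (hf : StandingF f) (ε α : ℝ → ℝ) (hε : AdmissibleEps ε) (hα : AdmissibleAlpha α)
    (x0 v0 : EuclideanSpace ℝ (Fin n)) (x : ℝ → EuclideanSpace ℝ (Fin n))
    (hsol : IsSolVM f β ε α x x0 v0) :
    ∀ t ∈ Set.Ici (0:ℝ),
      β • gradient f (x t)
        = (β * Real.exp (-t / β)) • gradient f x0
          + (Real.exp (-t / β) * ε 0) • v0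
          - ε t • deriv x t
          + Real.exp (-t / β) •
              ∫ s in (0:ℝ)..t,
                (Real.exp (s / β) * (ε s / β + deriv ε s - α s)) • deriv x s := by
  intro t ht
  obtain ⟨hx2, hx0, hv0, hode⟩ := hsol
  have hβ' : (β:ℝ) ≠ 0 := ne_of_gt hβ
  rw [show (2 : WithTop ℕ∞) = 1 + 1 from rfl] at hx2
  have hxd : Differentiable ℝ x := (contDiff_succ_iff_deriv.mp hx2).1
  have hdx1 : ContDiff ℝ 1 (deriv x) := (contDiff_succ_iff_deriv.mp hx2).2.2
  have hdxd : Differentiable ℝ (deriv x) := hdx1.differentiable one_ne_zero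
  have hdxc : Continuous (deriv x) := hdxd.continuous
  have hgd : Differentiable ℝ (gradient f) := by
    have h1 : ContDiff ℝ 1 (fderiv ℝ f) := hf.2.1.fderiv_right (by norm_num)
    have h2 : gradient f = fun y =>
        (InnerProductSpace.toDual ℝ (EuclideanSpace ℝ (Fin n))).symm (fderiv ℝ f y) := rfl
    rw [h2]
    exact (InnerProductSpace.toDual ℝ
      (EuclideanSpace ℝ (Fin n))).symm.toContinuousLinearEquiv.differentiable.comp
      (h1.differentiable one_ne_zero)
  set F : ℝ → EuclideanSpace ℝ (Fin n) :=
    fun s => β • gradient f (x s) + ε s • deriv x s with hF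
  set g : ℝ → EuclideanSpace ℝ (Fin n) := fun s => Real.exp (s / β) • F s with hg
  have hderivg : ∀ s ∈ Set.Ici (0:ℝ), HasDerivAt g
      (Real.exp (s / β) • ((ε s / β + deriv ε s - α s) • deriv x s)) s := by
    intro s hs
    have hexp : HasDerivAt (fun u : ℝ => Real.exp (u / β)) (β⁻¹ * Real.exp (s / β)) s := by
      have h1 : HasDerivAt (fun u : ℝ => u / β) (1 / β) s := (hasDerivAt_id s).div_const β
      have := (Real.hasDerivAt_exp (s / β)).comp s h1
      rw [one_div, mul_comm] at this
      exact this
    have hgradx : HasDerivAt (fun u => gradient f (x u))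
        (hessApp f (x s) (deriv x s)) s :=
      (hgd (x s)).hasFDerivAt.comp_hasDerivAt s (hxd s).hasDerivAt
    have hepss : HasDerivAt ε (deriv ε s) s := (hε.2.2.1 s).hasDerivAt
    have hxx : HasDerivAt (deriv x) (deriv (deriv x) s) s := (hdxd s).hasDerivAt
    have hFd : HasDerivAt F
        (β • hessApp f (x s) (deriv x s)
          + (ε s • deriv (deriv x) s + deriv ε s • deriv x s)) s :=
      ((hgradx.const_smul β).add (hepss.smul hxx))
    have hgd' := hexp.smul hFd
    refine hgd'.congr_deriv ?_
    have h := hode s hs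
    have hkey : gradient f (x s)
        = 0 - (ε s • deriv (deriv x) s + α s • deriv x s
            + β • hessApp f (x s) (deriv x s)) := by
      rw [← h]; abel
    simp only [hF]
    rw [hkey]
    match_scalars <;> field_simp <;> ring
  have hcont : Continuous (fun s : ℝ =>
      Real.exp (s / β) • ((ε s / β + deriv ε s - α s) • deriv x s)) := by
    have hce : Continuous ε := hε.2.2.1.continuous
    have hcde : Continuous (deriv ε) := hε.2.2.2.1.continuous
    have hca : Continuous α := hα.2.2.continuous
    exact ((Real.continuous_exp.comp (continuous_id.div_const β)).smul
      (((hce.div_const β).add hcde).sub hca |>.smul hdxc))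
  have hsub : Set.uIcc (0:ℝ) t ⊆ Set.Ici (0:ℝ) := by
    rw [Set.uIcc_of_le ht]
    exact fun u hu => hu.1
  have hftc : (∫ s in (0:ℝ)..t,
      Real.exp (s / β) • ((ε s / β + deriv ε s - α s) • deriv x s)) = g t - g 0 :=
    intervalIntegral.integral_eq_sub_of_hasDerivAt
      (fun s hs => hderivg s (hsub hs)) (hcont.intervalIntegrable 0 t)
  have hint_eq : (∫ s in (0:ℝ)..t,
        (Real.exp (s / β) * (ε s / β + deriv ε s - α s)) • deriv x s)
      = g t - g 0 := by
    rw [← hftc]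
    congr 1
    funext s
    rw [smul_smul]
  rw [hint_eq]
  have hg0 : g 0 = β • gradient f x0 + ε 0 • v0 := by
    simp [hg, hF, hx0, hv0]
  have hgt : g t = Real.exp (t / β) • (β • gradient f (x t) + ε t • deriv x t) := rfl
  rw [hg0, hgt]
  have hexp2 : Real.exp (-t / β) = (Real.exp (t / β))⁻¹ := by
    rw [neg_div, Real.exp_neg]
  rw [hexp2]
  have hne : Real.exp (t / β) ≠ 0 := Real.exp_ne_zero _
  match_scalars <;> field_simp <;> ring
end

section
/- Suppose ε and α are three times continuously differentiable and ε(0) = ε0 satisfies ε0 < (βλ)² / (2|α'(t)| + 4λ) for all t ≥ 0. Define p(t) = (α(t) + βλ)/ε(t) and r(t) = p(t)²/4 + p'(t)/2 − λ/ε(t). Then p and r are twice continuously differentiable, r(t) > 0 for all t ≥ 0, and if x solves the scalar ODE ε(t)ẍ(t) + (α(t)+βλ)ẋ(t) + λx(t) = 0 with x(0) = x0, ẋ(0) = ẋ0, then the function y(t) = x(t) exp(∫₀ᵗ p(s)/2 ds) solves ÿ(t) − r(t)y(t) = 0 for all t ≥ 0, with y(0) = x0 and ẏ(0) = ẋ0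 + (p(0)/2)x0. -/
open Real Filter MeasureTheory Set

private lemma deriv_nonpos_of_antitoneOn (f : ℝ → ℝ) (hf : AntitoneOn f (Set.Ici 0))
    (hd : Differentiable ℝ f) {t : ℝ} (ht : 0 ≤ t) : deriv f t ≤ 0 := by
  have h := (hd t).hasDerivAt
  rw [hasDerivAt_iff_tendsto_slope] at h
  have h2 : Tendsto (slope f t) (nhdsWithin t (Set.Ioi t)) (nhds (deriv f t)) :=
    h.mono_left (nhdsWithin_mono _ fun s hs => ne_of_gt hs)
  refine le_of_tendsto h2 ?_
  filter_upwards [self_mem_nhdsWithin] with s hs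
  have hts : t < s := hs
  have hle : f s ≤ f t := hf ht (le_trans ht hts.le) hts.le
  rw [slope_def_field]
  exact div_nonpos_of_nonpos_of_nonneg (by linarith) (by linarith)

theorem stmt12 (lam β : ℝ) (hlam : 0 < lam) (hβ : 0 < β)
    (ε α : ℝ → ℝ)
    (hε_anti : AntitoneOn ε (Set.Ici 0)) (hε_pos : ∀ t ∈ Set.Ici (0:ℝ), 0 < ε t)
    (hα_anti : AntitoneOn α (Set.Ici 0)) (hα_nonneg : ∀ t ∈ Set.Ici (0:ℝ), 0 ≤ α t)
    (hε3 : ContDiff ℝ 3 ε) (hα3 : ContDiff ℝ 3 α)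
    (hsmall : ∀ t ∈ Set.Ici (0:ℝ), ε 0 < (β * lam) ^ 2 / (2 * |deriv α t| + 4 * lam))
    (p r : ℝ → ℝ)
    (hp : ∀ t, p t = (α t + β * lam) / ε t)
    (hr : ∀ t, r t = p t ^ 2 / 4 + deriv p t / 2 - lam / ε t) :
    ContDiffOn ℝ 2 p (Set.Ici 0) ∧ ContDiffOn ℝ 2 r (Set.Ici 0) ∧
    (∀ t ∈ Set.Ici (0:ℝ), 0 < r t) ∧
    ∀ x : ℝ → ℝ, ∀ x0 v0 : ℝ, ContDiff ℝ 2 x → x 0 = x0 → deriv x 0 = v0 →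
      (∀ t ∈ Set.Ici (0:ℝ),
        ε t * deriv (deriv x) t + (α t + β * lam) * deriv x t + lam * x t = 0) →
      ∀ y : ℝ → ℝ,
        (∀ t, y t = x t * Real.exp (∫ s in (0:ℝ)..t, p s / 2)) →
        (∀ t ∈ Set.Ici (0:ℝ), deriv (deriv y) t - r t * y t = 0) ∧
        y 0 = x0 ∧ deriv y 0 = v0 + p 0 / 2 * x0 := by
  -- find an open interval W = Ioi (-δ) on which ε is positive
  have hε0 : 0 < ε 0 := hε_pos 0 Set.self_mem_Ici
  have hnhds : ε ⁻¹' Set.Ioi 0 ∈ nhds (0:ℝ) :=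
    hε3.continuous.continuousAt.preimage_mem_nhds (Ioi_mem_nhds hε0)
  obtain ⟨δ, hδpos, hδball⟩ := Metric.mem_nhds_iff.mp hnhds
  set W : Set ℝ := Set.Ioi (-δ) with hW_def
  have hWopen : IsOpen W := isOpen_Ioi
  have hIciW : Set.Ici (0:ℝ) ⊆ W := fun t ht => lt_of_lt_of_le (neg_lt_zero.mpr hδpos) ht
  have hεW : ∀ t ∈ W, 0 < ε t := by
    intro t ht
    rcases le_or_gt 0 t with h | h
    · exact hε_pos t h
    · have : t ∈ Metric.ball (0:ℝ) δ := by
        simp only [Metric.mem_ball, Real.dist_eq, sub_zero]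
        rw [abs_of_neg h]
        have htδ : -δ < t := ht
        linarith
      exact hδball this
  have hεne : ∀ t ∈ W, ε t ≠ 0 := fun t ht => (hεW t ht).ne'
  -- smoothness of p on W
  have hq3 : ContDiffOn ℝ 3 (fun t => (α t + β * lam) / ε t) W :=
    (hα3.contDiffOn.add contDiffOn_const).div hε3.contDiffOn hεne
  have hp3 : ContDiffOn ℝ 3 p W := hq3.congr fun t _ => hp t
  have hpW : ContDiffOn ℝ 2 p W := hp3.of_le (by norm_num)
  have hdpW : ContDiffOn ℝ 2 (deriv p) W := by
    have h31 : ContDiffOn ℝ (2 + 1) p W := hp3.of_le (by norm_num)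
    exact ((contDiffOn_succ_iff_deriv_of_isOpen hWopen).mp h31).2.2
  have hpdiff : ∀ t ∈ W, DifferentiableAt ℝ p t := fun t ht =>
    (hp3.contDiffAt (hWopen.mem_nhds ht)).differentiableAt (by norm_num)
  have hpCO : ContinuousOn p W := hpW.continuousOn
  have hεdiff : Differentiable ℝ ε := hε3.differentiable (by norm_num)
  have hαdiff : Differentiable ℝ α := hα3.differentiable (by norm_num)
  -- formula for deriv p on W
  have hdp_formula : ∀ t ∈ W, deriv p t =
      (deriv α t * ε t - (α t + β * lam) * deriv ε t) / ε t ^ 2 := by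
    intro t ht
    have hq : HasDerivAt (fun u => (α u + β * lam) / ε u)
        ((deriv α t * ε t - (α t + β * lam) * deriv ε t) / ε t ^ 2) t :=
      ((hαdiff t).hasDerivAt.add_const _).div (hεdiff t).hasDerivAt (hεne t ht)
    have heq : p =ᶠ[nhds t] fun u => (α u + β * lam) / ε u :=
      Filter.Eventually.of_forall hp
    rw [heq.deriv_eq]
    exact hq.deriv
  refine ⟨hpW.mono hIciW, ?_, ?_, ?_⟩
  · -- smoothness of r
    have : ContDiffOn ℝ 2 (fun t => p t ^ 2 / 4 + deriv p t / 2 - lam / ε t) W :=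
      (((hpW.pow 2).div_const 4).add (hdpW.div_const 2)).sub
        (contDiffOn_const.div (hε3.contDiffOn.of_le (by norm_num)) hεne)
    exact (this.congr fun t _ => hr t).mono hIciW
  · -- positivity of r
    intro t ht
    have htW : t ∈ W := hIciW ht
    have he : 0 < ε t := hεW t htW
    have hee0 : ε t ≤ ε 0 := hε_anti (Set.self_mem_Ici) ht ht
    have haa : deriv α t ≤ 0 := deriv_nonpos_of_antitoneOn α hα_anti hαdiff ht
    have hea : deriv ε t ≤ 0 := deriv_nonpos_of_antitoneOn ε hε_anti hεdiff ht
    have hA : 0 ≤ α t := hα_nonneg t ht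
    have hsm := hsmall t ht
    rw [abs_of_nonpos haa] at hsm
    have hden : 0 < 2 * (-deriv α t) + 4 * lam := by nlinarith
    have key : (2 * (-deriv α t) + 4 * lam) * ε t < (β * lam) ^ 2 := by
      rw [lt_div_iff₀ hden] at hsm
      nlinarith
    rw [hr t, hp t, hdp_formula t htW]
    have hnum : 0 < (α t + β * lam) ^ 2 +
        2 * (deriv α t * ε t - (α t + β * lam) * deriv ε t) - 4 * lam * ε t := by
      have hB : 0 < β * lam := mul_pos hβ hlam
      nlinarith [key, sq_nonneg (α t), mul_nonneg hA hB.le,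
        mul_nonneg (add_nonneg hA hB.le) (neg_nonneg.mpr hea)]
    have hrepr : ((α t + β * lam) / ε t) ^ 2 / 4 +
        ((deriv α t * ε t - (α t + β * lam) * deriv ε t) / ε t ^ 2) / 2 - lam / ε t =
        ((α t + β * lam) ^ 2 + 2 * (deriv α t * ε t - (α t + β * lam) * deriv ε t)
          - 4 * lam * ε t) / (4 * ε t ^ 2) := by
      field_simp
      ring
    rw [hrepr]
    exact div_pos hnum (by positivity)
  · -- the ODE part
    intro x x0 v0 hx2 hx0 hv0 hODE y hy
    have hxdiff : Differentiable ℝ x := hx2.differentiable (by norm_num)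
    have hx'diff : Differentiable ℝ (deriv x) := by
      have h11 : ContDiff ℝ (1 + 1) x := hx2.of_le (by norm_num)
      exact ((contDiff_succ_iff_deriv.mp h11).2.2).differentiable (by norm_num)
    -- derivative of the integral
    have hI : ∀ t ∈ W, HasDerivAt (fun u => ∫ s in (0:ℝ)..u, p s / 2) (p t / 2) t := by
      intro t ht
      have hpCO2 : ContinuousOn (fun s => p s / 2) W := hpCO.div_const 2
      have hsub : Set.uIcc (0:ℝ) t ⊆ W := by
        intro s hs
        have h1 : min (0:ℝ) t ≤ s := hs.1
        have h2 : -δ < min (0:ℝ) t := lt_min (by linarith) (by exact ht)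
        exact lt_of_lt_of_le h2 h1
      exact intervalIntegral.integral_hasDerivAt_right
        ((hpCO2.mono hsub).intervalIntegrable)
        (hpCO2.stronglyMeasurableAtFilter hWopen t ht)
        ((hpCO2.continuousAt (hWopen.mem_nhds ht)))
    -- first derivative of y
    have hy' : ∀ t ∈ W, HasDerivAt y
        ((deriv x t + x t * (p t / 2)) * Real.exp (∫ s in (0:ℝ)..t, p s / 2)) t := by
      intro t ht
      have hE : HasDerivAt (fun u => Real.exp (∫ s in (0:ℝ)..u, p s / 2))
          (p t / 2 * Real.exp (∫ s in (0:ℝ)..t, p s / 2)) t := by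
        have := (hI t ht).exp
        convert this using 1
        ring
      have hmul := (hxdiff t).hasDerivAt.mul hE
      have : HasDerivAt (fun u => x u * Real.exp (∫ s in (0:ℝ)..u, p s / 2))
          ((deriv x t + x t * (p t / 2)) * Real.exp (∫ s in (0:ℝ)..t, p s / 2)) t := by
        exact hmul.congr_deriv (by ring)
      exact this.congr_of_eventuallyEq (Filter.Eventually.of_forall hy)
    have hyd : ∀ t ∈ W, deriv y t =
        (deriv x t + x t * (p t / 2)) * Real.exp (∫ s in (0:ℝ)..t, p s / 2) :=
      fun t ht => (hy' t ht).deriv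
    refine ⟨?_, ?_, ?_⟩
    · intro t ht
      have htW : t ∈ W := hIciW ht
      have hne := hεne t htW
      -- second derivative of y
      have heq : deriv y =ᶠ[nhds t] fun u =>
          (deriv x u + x u * (p u / 2)) * Real.exp (∫ s in (0:ℝ)..u, p s / 2) := by
        filter_upwards [hWopen.mem_nhds htW] with u hu
        exact hyd u hu
      have hg : HasDerivAt (fun u =>
          (deriv x u + x u * (p u / 2)) * Real.exp (∫ s in (0:ℝ)..u, p s / 2))
          ((deriv (deriv x) t + (deriv x t * (p t / 2) + x t * (deriv p t / 2))) *
            Real.exp (∫ s in (0:ℝ)..t, p s / 2) +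
          (deriv x t + x t * (p t / 2)) *
            (p t / 2 * Real.exp (∫ s in (0:ℝ)..t, p s / 2))) t := by
        have h1 : HasDerivAt (fun u => x u * (p u / 2))
            (deriv x t * (p t / 2) + x t * (deriv p t / 2)) t :=
          (hxdiff t).hasDerivAt.mul ((hpdiff t htW).hasDerivAt.div_const 2)
        have hE : HasDerivAt (fun u => Real.exp (∫ s in (0:ℝ)..u, p s / 2))
            (p t / 2 * Real.exp (∫ s in (0:ℝ)..t, p s / 2)) t := by
          have := (hI t htW).exp
          convert this using 1
          ring
        exact ((hx'diff t).hasDerivAt.add h1).mul hE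
      have hdd : deriv (deriv y) t =
          (deriv (deriv x) t + (deriv x t * (p t / 2) + x t * (deriv p t / 2))) *
            Real.exp (∫ s in (0:ℝ)..t, p s / 2) +
          (deriv x t + x t * (p t / 2)) *
            (p t / 2 * Real.exp (∫ s in (0:ℝ)..t, p s / 2)) := by
        rw [heq.deriv_eq]; exact hg.deriv
      have hD2 : deriv (deriv x) t =
          (-((α t + β * lam) * deriv x t) - lam * x t) / ε t := by
        rw [eq_div_iff hne]
        have := hODE t ht
        linarith
      rw [hdd, hr t, hy t, hD2, hp t]
      field_simp
      ring
    · rw [hy 0]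
      simp [intervalIntegral.integral_same, hx0]
    · rw [hyd 0 (hIciW Set.self_mem_Ici)]
      simp [intervalIntegral.integral_same, hx0, hv0]
      ring
end
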